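/- Let w be a word, k, ℓ ∈ ℕ. If there exist a letter a with |w|_a ≥ k, an integer k' ≥ k − ℓ, and words x, y with w = x a^{k'} y, then w ∼^J_{k,ℓ} x a^{k'+1} y; consequently the equivalence class of w under ∼^J_{k,ℓ} is infinite. -/

import Mathlib

open List

variable {α : Type*}

/-- Parikh vector comparison: `u` has at most as many occurrences of each letter as `w`. -/
def ParikhLE [DecidableEq α] (u w : List α) : Prop :=
  ∀ a : α, u.count a ≤ w.count a

/-- `u` is a jumbled scattered factor of `w` with `ℓ` jumbles. -/
def JSF [DecidableEq α] (w : List α) (ℓ : ℕ) (u : List α) : Prop :=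
  ParikhLE u w ∧ ∃ v : List α, v.Sublist u ∧ v.Sublist w ∧ v.length + ℓ = u.length

/-- The jumble index `δ_w(u)`: minimal number of jumbles. -/
noncomputable def jumbleIndex [DecidableEq α] (w u : List α) : ℕ :=
  sInf {ℓ : ℕ | JSF w ℓ u}

/-- Length of a longest common scattered factor (subsequence) of `u` and `w`. -/
noncomputable def lcsf (u w : List α) : ℕ :=
  sSup {n : ℕ | ∃ v : List α, v.Sublist u ∧ v.Sublist w ∧ v.length = n}

/-- Length-`k` jumbled scattered factors of `w` with `ℓ` jumbles. -/
def JScatFactK [DecidableEq α] (k : ℕ) (w : List α) (ℓ : ℕ) : Set (List α) :=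
  {u | u.length = k ∧ JSF w ℓ u}

/-- Jumbled scattered factors of `w` of length at most `k` with `ℓ` jumbles. -/
def JScatFactLe [DecidableEq α] (k : ℕ) (w : List α) (ℓ : ℕ) : Set (List α) :=
  {u | u.length ≤ k ∧ JSF w ℓ u}

/-- Universality index `ι(w)`: largest `k` with `Σ^k ⊆ ScatFact(w)`. -/
noncomputable def univIndex (α : Type*) [Fintype α] (w : List α) : ℕ :=
  sSup {k : ℕ | ∀ u : List α, u.length = k → u.Sublist w}

/-- Minimal number of occurrences of a letter in `w`. -/
noncomputable def minCount (α : Type*) [Fintype α] [DecidableEq α] [Nonempty α]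
    (w : List α) : ℕ :=
  Finset.univ.inf' Finset.univ_nonempty (fun a : α => w.count a)


lemma sublist_shrink (x y v : List α) (a : α) (k' : ℕ)
    (hv : v.Sublist (x ++ List.replicate (k' + 1) a ++ y)) (hlen : v.length ≤ k') :
    v.Sublist (x ++ List.replicate k' a ++ y) := by
  rw [List.append_assoc] at hv ⊢
  obtain ⟨v1, v23, rfl, h1, h23⟩ := List.sublist_append_iff.mp hv
  obtain ⟨v2, v3, rfl, h2, h3⟩ := List.sublist_append_iff.mp h23
  obtain ⟨m, hm, rfl⟩ := List.sublist_replicate_iff.mp h2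
  refine List.Sublist.append h1 (List.Sublist.append ?_ h3)
  apply (List.replicate_sublist_replicate a).mpr
  simp [List.length_append, List.length_replicate] at hlen
  omega

lemma jsf_step [DecidableEq α] (x y : List α) (a : α) (k ℓ k' : ℕ)
    (ha : k ≤ (x ++ List.replicate k' a ++ y).count a) (hk' : k - ℓ ≤ k') (hℓ : 1 ≤ ℓ) :
    JScatFactLe k (x ++ List.replicate k' a ++ y) ℓ
      = JScatFactLe k (x ++ List.replicate (k' + 1) a ++ y) ℓ := by
  set w := x ++ List.replicate k' a ++ y with hw
  have hsub : w.Sublist (x ++ List.replicate (k' + 1) a ++ y) :=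
    List.Sublist.append
      (List.Sublist.append (List.Sublist.refl x)
        ((List.replicate_sublist_replicate a).mpr (Nat.le_succ k')))
      (List.Sublist.refl y)
  ext u
  constructor
  · rintro ⟨hlen, hp, v, hvu, hvw, hvl⟩
    exact ⟨hlen, fun b => (hp b).trans (hsub.count_le b), v, hvu, hvw.trans hsub, hvl⟩
  · rintro ⟨hlen, hp, v, hvu, hvw, hvl⟩
    refine ⟨hlen, ?_, v, hvu, ?_, hvl⟩
    · intro b
      by_cases hb : b = a
      · rw [hb]
        calc u.count a ≤ u.length := List.count_le_length
        _ ≤ k := hlen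
        _ ≤ w.count a := ha
      · have := hp b
        have hab : (a == b) = false := beq_false_of_ne (fun h => hb h.symm)
        simp only [hw, List.count_append, List.count_replicate, hab,
          Bool.false_eq_true, if_false] at this ⊢
        exact this
    · exact sublist_shrink x y v a k' hvw (by omega)

theorem stmt12 [Fintype α] [DecidableEq α] (w x y : List α) (a : α) (k ℓ k' : ℕ)
    (hk : 1 ≤ k) (hℓ : 1 ≤ ℓ)
    (ha : k ≤ w.count a) (hk' : k - ℓ ≤ k')
    (hw : w = x ++ List.replicate k' a ++ y) :
    JScatFactLe k w ℓ = JScatFactLe k (x ++ List.replicate (k' + 1) a ++ y) ℓ ∧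
      {v : List α | JScatFactLe k v ℓ = JScatFactLe k w ℓ}.Infinite := by
  subst hw
  have hcount : ∀ n : ℕ, k ≤ (x ++ List.replicate (k' + n) a ++ y).count a := by
    intro n
    have := ha
    simp only [List.count_append, List.count_replicate_self] at this ⊢
    omega
  have key : ∀ n : ℕ, JScatFactLe k (x ++ List.replicate (k' + n) a ++ y) ℓ
      = JScatFactLe k (x ++ List.replicate k' a ++ y) ℓ := by
    intro n
    induction n with
    | zero => rfl
    | succ n ih =>
      rw [← ih, show k' + (n + 1) = (k' + n) + 1 from rfl]
      exact (jsf_step x y a k ℓ (k' + n) (hcount n) (by omega) hℓ).symm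
  constructor
  · have := key 1
    simpa using this.symm
  · refine Set.infinite_of_injective_forall_mem
      (f := fun n : ℕ => x ++ List.replicate (k' + n) a ++ y) ?_ ?_
    · intro m n hmn
      have h2 := congrArg List.length hmn
      simp only [List.length_append, List.length_replicate] at h2
      omega
    · intro n
      exact key n
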